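/- (Kleinman's policy iteration) Let K : ℕ → ℝ^{m×n} and P : ℕ → ℝ^{n×n} (indices i ≥ 1, P_i symmetric) satisfy: K₁ is stabilizing; for each i ≥ 1, (A − BK_i)ᵀP_i + P_i(A − BK_i) + Q + K_iᵀRK_i = 0; and K_{i+1} = R⁻¹BᵀP_i. Then: (i) A − BK_i is Hurwitz for every i ≥ 1; (ii) for every i ≥ 1, P_i − P_{i+1} and P_i − P* are positive semidefinite (P₁ ≥ P₂ ≥ ⋯ ≥ P*); (iii) P_i → P* and K_i → K* as i → ∞. -/

import Mathlib

open Matrix MeasureTheory Filter NormedSpace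
open scoped Kronecker

noncomputable section

/-- A real square matrix is Hurwitz if every eigenvalue over `ℂ` has negative real part. -/
def IsHurwitz {n : Type*} [Fintype n] [DecidableEq n] (X : Matrix n n ℝ) : Prop :=
  ∀ μ ∈ spectrum ℂ (X.map (algebraMap ℝ ℂ)), μ.re < 0

/-- The Frobenius norm of a real matrix. -/
def frobNorm {p q : Type*} [Fintype p] [Fintype q] (X : Matrix p q ℝ) : ℝ :=
  Real.sqrt (∑ i, ∑ j, (X i j) ^ 2)

/-- The spectral (ℓ²-operator) norm of a real matrix. -/
def spec2Norm {p q : Type*} [Fintype p] [Fintype q] [DecidableEq q] (X : Matrix p q ℝ) : ℝ :=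
  ‖LinearMap.toContinuousLinearMap (Matrix.toEuclideanLin X)‖

open scoped NNReal ENNReal

namespace Kleinman

variable {a b : ℕ}

lemma mem_spectrum_iff_exists (M : Matrix (Fin a) (Fin a) ℂ) (μ : ℂ) :
    μ ∈ spectrum ℂ M ↔ ∃ v, v ≠ 0 ∧ M *ᵥ v = μ • v := by
  rw [spectrum.mem_iff, Matrix.isUnit_iff_isUnit_det, isUnit_iff_ne_zero, not_not,
    ← Matrix.exists_mulVec_eq_zero_iff]
  constructor
  · rintro ⟨v, hv, h⟩
    refine ⟨v, hv, ?_⟩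
    rw [Matrix.sub_mulVec, sub_eq_zero] at h
    rw [← h]
    funext i
    simp [Matrix.mulVec, dotProduct, Matrix.algebraMap_matrix_apply, ite_mul,
      Finset.sum_ite_eq, Pi.smul_apply, smul_eq_mul]
  · rintro ⟨v, hv, h⟩
    refine ⟨v, hv, ?_⟩
    rw [Matrix.sub_mulVec, sub_eq_zero, h]
    funext i
    simp [Matrix.mulVec, dotProduct, Matrix.algebraMap_matrix_apply, ite_mul,
      Finset.sum_ite_eq, Pi.smul_apply, smul_eq_mul]

/-- real part of complexified mulVec -/
lemma re_map_mulVec (M : Matrix (Fin a) (Fin b) ℝ) (v : Fin b → ℂ) (i : Fin a) :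
    ((M.map (algebraMap ℝ ℂ) *ᵥ v) i).re = (M *ᵥ fun j => (v j).re) i := by
  simp [Matrix.mulVec, dotProduct, Complex.re_sum, Complex.mul_re]

lemma im_map_mulVec (M : Matrix (Fin a) (Fin b) ℝ) (v : Fin b → ℂ) (i : Fin a) :
    ((M.map (algebraMap ℝ ℂ) *ᵥ v) i).im = (M *ᵥ fun j => (v j).im) i := by
  simp [Matrix.mulVec, dotProduct, Complex.im_sum, Complex.mul_im]

lemma star_map_mulVec (M : Matrix (Fin a) (Fin b) ℝ) (v : Fin b → ℂ) :
    star (M.map (algebraMap ℝ ℂ) *ᵥ v) = M.map (algebraMap ℝ ℂ) *ᵥ star v := by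
  funext i
  apply Complex.ext
  · rw [Pi.star_apply, Complex.star_def, Complex.conj_re, re_map_mulVec, re_map_mulVec]
    simp [Complex.star_def]
  · rw [Pi.star_apply, Complex.star_def, Complex.conj_im, im_map_mulVec, im_map_mulVec]
    have h : (fun j => ((star v) j).im) = fun j => -((v j).im) := by
      funext j; simp [Complex.star_def]
    rw [h]
    have h2 : (fun j => -((v j).im)) = -(fun j => ((v j).im)) := rfl
    rw [h2, Matrix.mulVec_neg]
    simp

lemma re_star_dot (M : Matrix (Fin a) (Fin a) ℝ) (v : Fin a → ℂ) :
    ((star v) ⬝ᵥ (M.map (algebraMap ℝ ℂ) *ᵥ v)).re =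
      (fun i => (v i).re) ⬝ᵥ (M *ᵥ fun j => (v j).re)
        + (fun i => (v i).im) ⬝ᵥ (M *ᵥ fun j => (v j).im) := by
  simp only [dotProduct, Complex.re_sum, ← Finset.sum_add_distrib]
  refine Finset.sum_congr rfl fun i _ => ?_
  have h1 := re_map_mulVec M v i
  have h2 := im_map_mulVec M v i
  simp only [Pi.star_apply, Complex.mul_re, Complex.star_def, Complex.conj_re, Complex.conj_im]
  rw [h1, h2]
  ring

section Gelfand

attribute [local instance] Matrix.linftyOpNormedAddCommGroup Matrix.linftyOpNormedRing
  Matrix.linftyOpNormedAlgebra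

variable {a : ℕ}

lemma entry_nnnorm_le (M : Matrix (Fin a) (Fin a) ℂ) (i j : Fin a) : ‖M i j‖₊ ≤ ‖M‖₊ := by
  rw [Matrix.linfty_opNNNorm_def]
  refine le_trans ?_ (Finset.le_sup (f := fun i => ∑ j, ‖M i j‖₊) (Finset.mem_univ i))
  exact Finset.single_le_sum (f := fun k => ‖M i k‖₊) (fun k _ => zero_le) (Finset.mem_univ j)

lemma pow_entry_tendsto_zero (ha : 0 < a) (T : Matrix (Fin a) (Fin a) ℝ)
    (hT : ∀ μ ∈ spectrum ℂ (T.map (algebraMap ℝ ℂ)), ‖μ‖ < 1) (i j : Fin a) :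
    Tendsto (fun k => (T ^ k) i j) atTop (nhds 0) := by
  haveI : Nonempty (Fin a) := Fin.pos_iff_nonempty.mp ha
  set Tc : Matrix (Fin a) (Fin a) ℂ := T.map (algebraMap ℝ ℂ) with hTc
  haveI : CompleteSpace (Matrix (Fin a) (Fin a) ℂ) := FiniteDimensional.complete ℂ _
  have hnon : (spectrum ℂ Tc).Nonempty := spectrum.nonempty Tc
  obtain ⟨k₀, hk₀mem, hk₀⟩ := spectrum.exists_nnnorm_eq_spectralRadius_of_nonempty hnon
  have hρ : spectralRadius ℂ Tc < 1 := by
    rw [← hk₀]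
    have h0 : ‖k₀‖₊ < 1 := by
      have := hT k₀ hk₀mem
      simpa [← NNReal.coe_lt_coe] using this
    exact_mod_cast ENNReal.coe_lt_one_iff.mpr h0
  obtain ⟨r, hr1, hr2⟩ := exists_between hρ
  have hrne : r ≠ ⊤ := ne_top_of_lt hr2
  set c : ℝ≥0 := r.toNNReal with hc
  have hcr : (c : ℝ≥0∞) = r := ENNReal.coe_toNNReal hrne
  have hc1 : (c : ℝ) < 1 := by
    have h := hr2
    rw [← hcr] at h
    exact_mod_cast h
  have hgel := spectrum.pow_nnnorm_pow_one_div_tendsto_nhds_spectralRadius Tc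
  have hev : ∀ᶠ k : ℕ in atTop, ((‖Tc ^ k‖₊ : ℝ≥0∞)) ^ (1 / (k:ℝ)) < r :=
    hgel.eventually_lt_const hr1
  have hbound : ∀ᶠ k : ℕ in atTop, |(T ^ k) i j| ≤ (c : ℝ) ^ k := by
    filter_upwards [hev, eventually_ge_atTop 1] with k hk hk1
    have hkne : (k:ℝ) ≠ 0 := by
      have : 0 < k := hk1
      positivity
    have hkk : ‖Tc ^ k‖₊ ≤ c ^ k := by
      have h1 : ((‖Tc ^ k‖₊ : ℝ≥0∞) ^ (1 / (k:ℝ))) ^ (k:ℝ) ≤ r ^ (k:ℝ) :=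
        ENNReal.rpow_le_rpow hk.le (by positivity)
      rw [← ENNReal.rpow_mul, one_div, inv_mul_cancel₀ hkne, ENNReal.rpow_one] at h1
      rw [← hcr, ← ENNReal.coe_rpow_of_nonneg _ (by positivity), ENNReal.coe_le_coe] at h1
      calc ‖Tc ^ k‖₊ ≤ c ^ (k:ℝ) := h1
        _ = c ^ k := by rw [← NNReal.rpow_natCast]
    have hentry : ‖(Tc ^ k) i j‖₊ ≤ c ^ k := le_trans (entry_nnnorm_le _ i j) hkk
    have hmap : (Tc ^ k) i j = ((T ^ k) i j : ℂ) := by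
      rw [hTc, show T.map (algebraMap ℝ ℂ) = (algebraMap ℝ ℂ).mapMatrix T from rfl, ← map_pow]
      simp
    have h3 : ‖(T ^ k) i j‖₊ ≤ c ^ k := by
      rw [hmap] at hentry
      simpa using hentry
    calc |(T ^ k) i j| = ((‖(T ^ k) i j‖₊ : ℝ)) := by simp [Real.norm_eq_abs]
      _ ≤ ((c ^ k : ℝ≥0) : ℝ) := by exact_mod_cast h3
      _ = (c:ℝ) ^ k := by push_cast; ring
  exact squeeze_zero_norm' (by simpa [Real.norm_eq_abs] using hbound)
    (tendsto_pow_atTop_nhds_zero_of_lt_one (by positivity) hc1)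

end Gelfand

section Lyapunov

lemma isUnit_det_sub_one {X : Matrix (Fin a) (Fin a) ℝ} (hX : IsHurwitz X) :
    IsUnit (X - 1).det := by
  rw [isUnit_iff_ne_zero]
  intro h0
  obtain ⟨v, hv, hveq⟩ := (Matrix.exists_mulVec_eq_zero_iff).mpr h0
  have hXv : X *ᵥ v = v := by
    rw [Matrix.sub_mulVec, Matrix.one_mulVec, sub_eq_zero] at hveq
    exact hveq
  have hc : (X.map (algebraMap ℝ ℂ)) *ᵥ ((algebraMap ℝ ℂ) ∘ v) = (1:ℂ) • ((algebraMap ℝ ℂ) ∘ v) := by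
    funext i
    rw [one_smul, ← RingHom.map_mulVec]
    rw [hXv]
    rfl
  have hv0 : ((algebraMap ℝ ℂ) ∘ v) ≠ 0 := by
    intro h
    apply hv
    funext i
    have := congrFun h i
    simpa using this
  have := hX 1 ((mem_spectrum_iff_exists _ 1).mpr ⟨_, hv0, hc⟩)
  norm_num at this

lemma hurwitz_cayley {X : Matrix (Fin a) (Fin a) ℝ} (hX : IsHurwitz X) :
    ∀ μ ∈ spectrum ℂ (((X + 1) * (X - 1)⁻¹).map (algebraMap ℝ ℂ)), ‖μ‖ < 1 := by
  intro μ hμ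
  have hdet := isUnit_det_sub_one hX
  obtain ⟨v, hv, hveq⟩ := (mem_spectrum_iff_exists _ μ).mp hμ
  set φ := (RingHom.mapMatrix (m := Fin a) (algebraMap ℝ ℂ)) with hφ
  have hW1 : φ (X - 1) * φ ((X - 1)⁻¹) = 1 := by
    rw [← _root_.map_mul, Matrix.mul_nonsing_inv _ hdet, _root_.map_one]
  set u : Fin a → ℂ := φ ((X - 1)⁻¹) *ᵥ v with hu
  have hvu : v = φ (X - 1) *ᵥ u := by
    rw [hu, Matrix.mulVec_mulVec, hW1, Matrix.one_mulVec]
  have hu0 : u ≠ 0 := by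
    intro h
    rw [h, Matrix.mulVec_zero] at hvu
    exact hv hvu
  have heig : φ (X + 1) *ᵥ u = μ • (φ (X - 1) *ᵥ u) := by
    rw [← hvu]
    have : ((X + 1) * (X - 1)⁻¹).map (algebraMap ℝ ℂ) = φ (X + 1) * φ ((X - 1)⁻¹) := by
      rw [← _root_.map_mul]; rfl
    rw [this, ← Matrix.mulVec_mulVec] at hveq
    exact hveq
  have heq : (X.map (algebraMap ℝ ℂ)) *ᵥ u + u
      = μ • ((X.map (algebraMap ℝ ℂ)) *ᵥ u) - μ • u := by
    have h1 : φ (X + 1) = X.map (algebraMap ℝ ℂ) + 1 := by rw [_root_.map_add, _root_.map_one]; rfl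
    have h2 : φ (X - 1) = X.map (algebraMap ℝ ℂ) - 1 := by rw [_root_.map_sub, _root_.map_one]; rfl
    rw [h1, h2] at heig
    rw [Matrix.add_mulVec, Matrix.one_mulVec] at heig
    rw [Matrix.sub_mulVec, Matrix.one_mulVec, smul_sub] at heig
    exact heig
  by_cases hμ1 : μ = 1
  · exfalso
    apply hu0
    rw [hμ1, one_smul, one_smul] at heq
    funext i
    have h := congrFun heq i
    simp only [Pi.add_apply, Pi.sub_apply] at h
    have : u i = 0 := by linear_combination h / 2
    simpa using this
  · have h1μ : (1:ℂ) - μ ≠ 0 := sub_ne_zero.mpr fun h => hμ1 h.symm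
    set lam : ℂ := (-1 - μ) / (1 - μ) with hlam
    have heiglam : (X.map (algebraMap ℝ ℂ)) *ᵥ u = lam • u := by
      funext i
      have h := congrFun heq i
      simp only [Pi.add_apply, Pi.sub_apply, Pi.smul_apply, smul_eq_mul] at h ⊢
      have key : (1 - μ) * ((X.map (algebraMap ℝ ℂ) *ᵥ u) i) = (-1 - μ) * u i := by
        linear_combination h
      rw [hlam, div_mul_eq_mul_div, eq_div_iff h1μ]
      linear_combination key
    have hlammem : lam ∈ spectrum ℂ (X.map (algebraMap ℝ ℂ)) :=
      (mem_spectrum_iff_exists _ lam).mpr ⟨u, hu0, heiglam⟩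
    have hlamre : lam.re < 0 := hX lam hlammem
    have hrel : μ * (lam - 1) = lam + 1 := by
      rw [hlam]
      field_simp
      ring
    have hlam1 : lam ≠ 1 := by
      intro h
      rw [h] at hlamre
      norm_num at hlamre
    have hpos : 0 < ‖lam - 1‖ := by
      rw [norm_pos_iff]
      exact sub_ne_zero.mpr hlam1
    have hnorm : ‖μ‖ * ‖lam - 1‖ = ‖lam + 1‖ := by rw [← norm_mul, hrel]
    have hsq : ‖lam + 1‖ ^ 2 < ‖lam - 1‖ ^ 2 := by
      have e1 : ‖lam + 1‖ ^ 2 = (lam.re + 1) ^ 2 + lam.im ^ 2 := by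
        rw [Complex.sq_norm, Complex.normSq_apply]
        simp [Complex.add_re, Complex.add_im]
        ring
      have e2 : ‖lam - 1‖ ^ 2 = (lam.re - 1) ^ 2 + lam.im ^ 2 := by
        rw [Complex.sq_norm, Complex.normSq_apply]
        simp [Complex.sub_re, Complex.sub_im]
        ring
      rw [e1, e2]
      nlinarith [hlamre]
    have hlt : ‖lam + 1‖ < ‖lam - 1‖ := by
      nlinarith [norm_nonneg (lam + 1), norm_nonneg (lam - 1)]
    nlinarith [norm_nonneg μ]

lemma quad_mulVec_eq {p q : ℕ} (M : Matrix (Fin p) (Fin q) ℝ) (u : Fin q → ℝ) (z : Fin p → ℝ) :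
    (M *ᵥ u) ⬝ᵥ z = u ⬝ᵥ (Mᵀ *ᵥ z) := by
  rw [dotProduct_mulVec, Matrix.vecMul_transpose]

lemma quad_triple {p q : ℕ} (A : Matrix (Fin p) (Fin q) ℝ) (B : Matrix (Fin p) (Fin p) ℝ)
    (u : Fin q → ℝ) :
    u ⬝ᵥ ((Aᵀ * B * A) *ᵥ u) = (A *ᵥ u) ⬝ᵥ (B *ᵥ (A *ᵥ u)) := by
  rw [quad_mulVec_eq A u (B *ᵥ (A *ᵥ u)), Matrix.mulVec_mulVec, Matrix.mulVec_mulVec]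

lemma lyapunov_psd (ha : 0 < a) {X P S : Matrix (Fin a) (Fin a) ℝ}
    (hX : IsHurwitz X) (hPsym : P.IsSymm) (hS : S.PosSemidef)
    (heq : Xᵀ * P + P * X + S = 0) : P.PosSemidef := by
  have hdet := isUnit_det_sub_one hX
  set W := (X - 1)⁻¹ with hWdef
  set T := (X + 1) * W with hTdef
  have hW1 : (X - 1) * W = 1 := Matrix.mul_nonsing_inv _ hdet
  have hWt : Wᵀ * (Xᵀ - 1) = 1 := by
    have h := congrArg Matrix.transpose hW1
    rwa [Matrix.transpose_mul, Matrix.transpose_sub, Matrix.transpose_one] at h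
  have h0 : Xᵀ * P + P * X = -S := eq_neg_of_add_eq_zero_left heq
  have key : (Xᵀ + 1) * P * (X + 1) = (Xᵀ - 1) * P * (X - 1) - (S + S) := by
    have expand : (Xᵀ + 1) * P * (X + 1) - (Xᵀ - 1) * P * (X - 1)
        = (Xᵀ * P + P * X) + (Xᵀ * P + P * X) := by noncomm_ring
    rw [h0] at expand
    have h2 : (Xᵀ + 1) * P * (X + 1) - (Xᵀ - 1) * P * (X - 1) = -(S + S) := by
      rw [expand]; abel
    have := sub_eq_iff_eq_add.mp h2
    rw [this]; abel
  have main : Tᵀ * P * T = P - Wᵀ * (S + S) * W := by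
    have hTt : Tᵀ = Wᵀ * (Xᵀ + 1) := by
      rw [hTdef, Matrix.transpose_mul, Matrix.transpose_add, Matrix.transpose_one]
    calc Tᵀ * P * T = Wᵀ * ((Xᵀ + 1) * P * (X + 1)) * W := by rw [hTt, hTdef]; noncomm_ring
      _ = Wᵀ * ((Xᵀ - 1) * P * (X - 1)) * W - Wᵀ * (S + S) * W := by rw [key]; noncomm_ring
      _ = (Wᵀ * (Xᵀ - 1)) * P * ((X - 1) * W) - Wᵀ * (S + S) * W := by noncomm_ring
      _ = P - Wᵀ * (S + S) * W := by rw [hWt, hW1, Matrix.one_mul, Matrix.mul_one]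
  rw [Matrix.posSemidef_iff_dotProduct_mulVec]
  constructor
  · rw [Matrix.IsHermitian, Matrix.conjTranspose_eq_transpose_of_trivial]
    exact hPsym
  · intro x
    have hstar : star x = x := by funext i; simp
    rw [hstar]
    set w : ℕ → Fin a → ℝ := fun k => (T ^ k) *ᵥ x with hw
    set g : ℕ → ℝ := fun k => w k ⬝ᵥ (P *ᵥ w k) with hg
    have hwsucc : ∀ k, w (k + 1) = T *ᵥ w k := by
      intro k
      show T ^ (k + 1) *ᵥ x = T *ᵥ (T ^ k *ᵥ x)
      rw [Matrix.mulVec_mulVec, ← pow_succ']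
    have hanti : ∀ k, g (k + 1) ≤ g k := by
      intro k
      have e1 : g (k + 1) = w k ⬝ᵥ ((Tᵀ * P * T) *ᵥ w k) := by
        have h1 : g (k + 1) = (T *ᵥ w k) ⬝ᵥ (P *ᵥ (T *ᵥ w k)) := by
          have hh := hwsucc k
          show w (k + 1) ⬝ᵥ (P *ᵥ w (k + 1)) = _
          rw [hh]
        rw [h1, ← quad_triple T P (w k)]
      have e2 : g (k + 1) = g k - (W *ᵥ w k) ⬝ᵥ ((S + S) *ᵥ (W *ᵥ w k)) := by
        rw [e1, main, Matrix.sub_mulVec, dotProduct_sub, quad_triple W (S + S) (w k)]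
      have hpos : 0 ≤ (W *ᵥ w k) ⬝ᵥ ((S + S) *ᵥ (W *ᵥ w k)) := by
        have h := (hS.add hS).dotProduct_mulVec_nonneg (W *ᵥ w k)
        have hst : star (W *ᵥ w k) = W *ᵥ w k := by funext i; simp
        rw [hst] at h
        exact h
      rw [e2]
      linarith
    have hwi : ∀ i, Tendsto (fun k => w k i) atTop (nhds 0) := by
      intro i
      have hrw : (fun k => w k i) = fun k => ∑ j, (T ^ k) i j * x j := by
        funext k
        rw [hw]
        simp [Matrix.mulVec, dotProduct]
      rw [hrw]
      have h := tendsto_finset_sum (Finset.univ : Finset (Fin a)) (fun j _ =>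
        (pow_entry_tendsto_zero ha T (hurwitz_cayley hX) i j).mul_const (x j))
      simpa using h
    have hg0 : Tendsto g atTop (nhds 0) := by
      have hrw : g = fun k => ∑ i, w k i * ∑ j, P i j * w k j := by
        funext k
        rw [hg]
        simp [dotProduct, Matrix.mulVec]
      rw [hrw]
      have h := tendsto_finset_sum (Finset.univ : Finset (Fin a)) (fun i _ =>
        (hwi i).mul (tendsto_finset_sum (Finset.univ : Finset (Fin a)) (fun j _ =>
          (tendsto_const_nhds (x := P i j)).mul (hwi j))))
      simpa using h
    have hmono : Antitone g := antitone_nat_of_succ_le hanti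
    have hge := hmono.le_of_tendsto hg0 0
    have : g 0 = x ⬝ᵥ (P *ᵥ x) := by
      have hw0 : w 0 = x := by
        show T ^ 0 *ᵥ x = x
        rw [pow_zero, Matrix.one_mulVec]
      show w 0 ⬝ᵥ (P *ᵥ w 0) = _
      rw [hw0]
    rw [← this]
    exact hge

end Lyapunov

section Step

lemma quad_mulVec_eq_c {p q : ℕ} (M : Matrix (Fin p) (Fin q) ℂ) (u : Fin q → ℂ) (z : Fin p → ℂ) :
    (M *ᵥ u) ⬝ᵥ z = u ⬝ᵥ (Mᵀ *ᵥ z) := by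
  rw [dotProduct_mulVec, Matrix.vecMul_transpose]

lemma star_triv {q : ℕ} (x : Fin q → ℝ) : star x = x := by funext i; simp

lemma hurwitz_step {a q : ℕ} {X P S : Matrix (Fin a) (Fin a) ℝ}
    {C : Matrix (Fin q) (Fin a) ℝ} {R' : Matrix (Fin q) (Fin q) ℝ}
    {B' : Matrix (Fin a) (Fin q) ℝ}
    (hP : P.PosDef) (hS : S.PosSemidef) (hR' : R'.PosDef)
    (heq : Xᵀ * P + P * X + S + Cᵀ * R' * C = 0)
    (hY : IsHurwitz (X + B' * C)) : IsHurwitz X := by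
  intro μ hμ
  obtain ⟨v, hv, hveq⟩ := (mem_spectrum_iff_exists _ μ).mp hμ
  set ar : Fin a → ℝ := fun i => (v i).re with har
  set ai : Fin a → ℝ := fun i => (v i).im with hai
  have hCS : (Cᵀ * R' * C).PosSemidef := by
    have h := hR'.posSemidef.conjTranspose_mul_mul_same C
    rwa [Matrix.conjTranspose_eq_transpose_of_trivial] at h
  set p : ℂ := star v ⬝ᵥ (P.map (algebraMap ℝ ℂ) *ᵥ v) with hp
  set s : ℂ := star v ⬝ᵥ (S.map (algebraMap ℝ ℂ) *ᵥ v) with hs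
  set t : ℂ := star v ⬝ᵥ ((Cᵀ * R' * C).map (algebraMap ℝ ℂ) *ᵥ v) with ht
  have hsum : (starRingEnd ℂ) μ * p + μ * p + s + t = 0 := by
    have hmap4 : ((Xᵀ * P + P * X + S + Cᵀ * R' * C).map (algebraMap ℝ ℂ))
        = (Xᵀ * P).map (algebraMap ℝ ℂ) + (P * X).map (algebraMap ℝ ℂ)
          + S.map (algebraMap ℝ ℂ) + (Cᵀ * R' * C).map (algebraMap ℝ ℂ) := by
      ext i j
      simp [Matrix.map_apply]
    have hzero : star v ⬝ᵥ ((Xᵀ * P + P * X + S + Cᵀ * R' * C).map (algebraMap ℝ ℂ) *ᵥ v)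
        = 0 := by
      rw [heq]
      have h0 : ((0 : Matrix (Fin a) (Fin a) ℝ).map (algebraMap ℝ ℂ)) = 0 := by
        ext i j; simp
      rw [h0, Matrix.zero_mulVec, dotProduct_zero]
    rw [hmap4, Matrix.add_mulVec, Matrix.add_mulVec, Matrix.add_mulVec,
      dotProduct_add, dotProduct_add, dotProduct_add] at hzero
    have t1 : star v ⬝ᵥ ((Xᵀ * P).map (algebraMap ℝ ℂ) *ᵥ v) = (starRingEnd ℂ) μ * p := by
      rw [Matrix.map_mul, ← Matrix.mulVec_mulVec, Matrix.transpose_map]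
      rw [← quad_mulVec_eq_c]
      rw [← star_map_mulVec, hveq, star_smul, smul_dotProduct]
      rfl
    have t2 : star v ⬝ᵥ ((P * X).map (algebraMap ℝ ℂ) *ᵥ v) = μ * p := by
      rw [Matrix.map_mul, ← Matrix.mulVec_mulVec, hveq, Matrix.mulVec_smul,
        dotProduct_smul]
      rfl
    rw [t1, t2] at hzero
    exact hzero
  have hpre : 0 < p.re := by
    rw [hp, re_star_dot, ← har, ← hai]
    have hne : ar ≠ 0 ∨ ai ≠ 0 := by
      by_contra hc
      push_neg at hc
      apply hv
      funext i
      apply Complex.ext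
      · have := congrFun hc.1 i
        simpa [har] using this
      · have := congrFun hc.2 i
        simpa [hai] using this
    have q1 := hP.posSemidef.dotProduct_mulVec_nonneg ar
    have q2 := hP.posSemidef.dotProduct_mulVec_nonneg ai
    rw [star_triv] at q1 q2
    rcases hne with h | h
    · have := hP.dotProduct_mulVec_pos h
      rw [star_triv] at this
      linarith
    · have := hP.dotProduct_mulVec_pos h
      rw [star_triv] at this
      linarith
  have hsre : 0 ≤ s.re := by
    rw [hs, re_star_dot, ← har, ← hai]
    have q1 := hS.dotProduct_mulVec_nonneg ar
    have q2 := hS.dotProduct_mulVec_nonneg ai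
    rw [star_triv] at q1 q2
    linarith
  have htre : 0 ≤ t.re := by
    rw [ht, re_star_dot, ← har, ← hai]
    have q1 := hCS.dotProduct_mulVec_nonneg ar
    have q2 := hCS.dotProduct_mulVec_nonneg ai
    rw [star_triv] at q1 q2
    linarith
  have heqre : 2 * μ.re * p.re + s.re + t.re = 0 := by
    have h := congrArg Complex.re hsum
    simp only [Complex.add_re, Complex.mul_re, Complex.conj_re, Complex.conj_im,
      Complex.zero_re] at h
    linarith
  have hle : μ.re ≤ 0 := by
    by_contra hpos
    push_neg at hpos
    nlinarith [mul_pos hpos hpre]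
  rcases lt_or_eq_of_le hle with h | h
  · exact h
  · exfalso
    have h0 : 2 * μ.re * p.re = 0 := by rw [h]; ring
    have htzero : t.re = 0 := by linarith
    rw [ht, re_star_dot, ← har, ← hai] at htzero
    have q1 := hCS.dotProduct_mulVec_nonneg ar
    have q2 := hCS.dotProduct_mulVec_nonneg ai
    rw [star_triv] at q1 q2
    have hq1 : ar ⬝ᵥ ((Cᵀ * R' * C) *ᵥ ar) = 0 := by linarith
    have hq2 : ai ⬝ᵥ ((Cᵀ * R' * C) *ᵥ ai) = 0 := by linarith
    have hCar : C *ᵥ ar = 0 := by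
      by_contra hne
      have := hR'.dotProduct_mulVec_pos (x := C *ᵥ ar) hne
      rw [star_triv] at this
      rw [quad_triple] at hq1
      linarith
    have hCai : C *ᵥ ai = 0 := by
      by_contra hne
      have := hR'.dotProduct_mulVec_pos (x := C *ᵥ ai) hne
      rw [star_triv] at this
      rw [quad_triple] at hq2
      linarith
    have hCv : C.map (algebraMap ℝ ℂ) *ᵥ v = 0 := by
      funext i
      apply Complex.ext
      · rw [re_map_mulVec]
        have := congrFun hCar i
        simpa [har] using this
      · rw [im_map_mulVec]
        have := congrFun hCai i
        simpa [hai] using this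
    have heigY : (X + B' * C).map (algebraMap ℝ ℂ) *ᵥ v = μ • v := by
      have hmp : (X + B' * C).map (algebraMap ℝ ℂ)
          = X.map (algebraMap ℝ ℂ)
            + (B'.map (algebraMap ℝ ℂ)) * (C.map (algebraMap ℝ ℂ)) := by
        ext i j
        simp [Matrix.map_apply, Matrix.add_apply, Matrix.mul_apply]
      rw [hmp, Matrix.add_mulVec, ← Matrix.mulVec_mulVec, hCv, Matrix.mulVec_zero, hveq,
        add_zero]
    have hmem : μ ∈ spectrum ℂ ((X + B' * C).map (algebraMap ℝ ℂ)) :=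
      (mem_spectrum_iff_exists _ μ).mpr ⟨v, hv, heigY⟩
    have := hY μ hmem
    rw [← h] at this
    exact lt_irrefl _ this

end Step


section MoreHelpers

lemma dot_single_mulVec (M : Matrix (Fin a) (Fin a) ℝ) (j k : Fin a) :
    (Pi.single j 1) ⬝ᵥ (M *ᵥ Pi.single k 1) = M j k := by
  rw [Matrix.mulVec_single_one]
  simp [dotProduct, Pi.single_apply, ite_mul]

lemma psd_eq_zero {M : Matrix (Fin a) (Fin a) ℝ} (h1 : M.PosSemidef)
    (h2 : (-M).PosSemidef) : M = 0 := by
  have hz : ∀ x, M *ᵥ x = 0 := by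
    intro x
    rw [← (h1.dotProduct_mulVec_zero_iff x)]
    have a1 := h1.dotProduct_mulVec_nonneg x
    have a2 := h2.dotProduct_mulVec_nonneg x
    rw [Matrix.neg_mulVec, dotProduct_neg] at a2
    linarith
  ext i j
  have := congrFun (hz (Pi.single j 1)) i
  rw [Matrix.mulVec_single_one] at this
  simpa using this

lemma entry_tendsto_mul {p q r : ℕ} {f : ℕ → Matrix (Fin p) (Fin q) ℝ}
    {g : ℕ → Matrix (Fin q) (Fin r) ℝ} {F : Matrix (Fin p) (Fin q) ℝ}
    {G : Matrix (Fin q) (Fin r) ℝ}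
    (hf : ∀ j k, Tendsto (fun i => f i j k) atTop (nhds (F j k)))
    (hg : ∀ j k, Tendsto (fun i => g i j k) atTop (nhds (G j k))) :
    ∀ j k, Tendsto (fun i => (f i * g i) j k) atTop (nhds ((F * G) j k)) := by
  intro j k
  simp only [Matrix.mul_apply]
  exact tendsto_finset_sum _ fun l _ => (hf j l).mul (hg l k)

lemma tendsto_quadform {M : ℕ → Matrix (Fin a) (Fin a) ℝ} {L : Matrix (Fin a) (Fin a) ℝ}
    (h : ∀ j k, Tendsto (fun i => M i j k) atTop (nhds (L j k))) (x : Fin a → ℝ) :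
    Tendsto (fun i => x ⬝ᵥ (M i *ᵥ x)) atTop (nhds (x ⬝ᵥ (L *ᵥ x))) := by
  have hrw : ∀ N : Matrix (Fin a) (Fin a) ℝ, x ⬝ᵥ (N *ᵥ x) = ∑ j, ∑ k, x j * (N j k * x k) := by
    intro N
    simp [dotProduct, Matrix.mulVec, Finset.mul_sum]
  simp only [hrw]
  exact tendsto_finset_sum _ fun j _ => tendsto_finset_sum _ fun k _ =>
    tendsto_const_nhds.mul ((h j k).mul_const (x k))

end MoreHelpers

end Kleinman

open Kleinman

attribute [local instance] Matrix.normedAddCommGroup Matrix.normedSpace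

/-- Kleinman's policy iteration: every iterate is stabilizing, the value
matrices decrease monotonically to `P*`, and the gains converge to `K*`. -/
theorem kleinman_policy_iteration
    (n m : ℕ) (hn : 0 < n) (hm : 0 < m)
    (A : Matrix (Fin n) (Fin n) ℝ) (B : Matrix (Fin n) (Fin m) ℝ)
    (Q : Matrix (Fin n) (Fin n) ℝ) (R : Matrix (Fin m) (Fin m) ℝ)
    (hQ : Q.PosSemidef) (hR : R.PosDef)
    (Pstar : Matrix (Fin n) (Fin n) ℝ) (hPstar : Pstar.PosDef)
    (hARE : Aᵀ * Pstar + Pstar * A - Pstar * B * R⁻¹ * Bᵀ * Pstar + Q = 0)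
    (hAstar : IsHurwitz (A - B * R⁻¹ * Bᵀ * Pstar))
    (K : ℕ → Matrix (Fin m) (Fin n) ℝ) (P : ℕ → Matrix (Fin n) (Fin n) ℝ)
    (hK1 : IsHurwitz (A - B * K 1))
    (hPsymm : ∀ i, 1 ≤ i → (P i).IsSymm)
    (hPE : ∀ i, 1 ≤ i →
      (A - B * K i)ᵀ * P i + P i * (A - B * K i) + Q + (K i)ᵀ * R * (K i) = 0)
    (hPI : ∀ i, 1 ≤ i → K (i + 1) = R⁻¹ * Bᵀ * P i) :
    (∀ i, 1 ≤ i → IsHurwitz (A - B * K i)) ∧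
    (∀ i, 1 ≤ i → (P i - P (i + 1)).PosSemidef ∧ (P i - Pstar).PosSemidef) ∧
    Tendsto (fun i => frobNorm (P i - Pstar)) atTop (nhds 0) ∧
    Tendsto (fun i => frobNorm (K i - R⁻¹ * Bᵀ * Pstar)) atTop (nhds 0) := by
  -- basic symmetry and invertibility facts
  have hRsym : Rᵀ = R := by
    rw [← Matrix.conjTranspose_eq_transpose_of_trivial]
    exact hR.1
  have hPstarSym : Pstarᵀ = Pstar := by
    rw [← Matrix.conjTranspose_eq_transpose_of_trivial]
    exact hPstar.1
  have hRdet : IsUnit R.det := hR.det_pos.ne'.isUnit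
  have hRinvT : R⁻¹ᵀ = R⁻¹ := by rw [Matrix.transpose_nonsing_inv, hRsym]
  have hGpsd : (B * R⁻¹ * Bᵀ).PosSemidef := by
    have h := hR.inv.posSemidef.mul_mul_conjTranspose_same B
    rwa [show Bᴴ = Bᵀ from Matrix.conjTranspose_eq_transpose_of_trivial B] at h
  have hKRKpsd : ∀ (C : Matrix (Fin m) (Fin n) ℝ), (Cᵀ * R * C).PosSemidef := by
    intro C
    have h := hR.posSemidef.conjTranspose_mul_mul_same C
    rwa [show Cᴴ = Cᵀ from Matrix.conjTranspose_eq_transpose_of_trivial C] at h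
  have hcanc1 : ∀ (Z : Matrix (Fin m) (Fin n) ℝ), R * (R⁻¹ * Z) = Z := fun Z =>
    Matrix.mul_nonsing_inv_cancel_left _ _ hRdet
  have hcanc2 : ∀ (Z : Matrix (Fin m) (Fin n) ℝ), R⁻¹ * (R * Z) = Z := fun Z =>
    Matrix.nonsing_inv_mul_cancel_left _ _ hRdet
  have hdsym : ∀ (M N : Matrix (Fin n) (Fin n) ℝ), Mᵀ = M → Nᵀ = N → (M - N).IsSymm := by
    intro M N h1 h2
    show (M - N)ᵀ = M - N
    rw [Matrix.transpose_sub, h1, h2]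
  -- Lyapunov identity for P i - Pstar
  have hPdiff : ∀ i, 1 ≤ i →
      (A - B * K i)ᵀ * (P i - Pstar) + (P i - Pstar) * (A - B * K i)
        + (K i - R⁻¹ * Bᵀ * Pstar)ᵀ * R * (K i - R⁻¹ * Bᵀ * Pstar) = 0 := by
    intro i hi
    have h1 := hPE i hi
    have key : (A - B * K i)ᵀ * (P i - Pstar) + (P i - Pstar) * (A - B * K i)
        + (K i - R⁻¹ * Bᵀ * Pstar)ᵀ * R * (K i - R⁻¹ * Bᵀ * Pstar)
        = ((A - B * K i)ᵀ * P i + P i * (A - B * K i) + Q + (K i)ᵀ * R * (K i))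
          - (Aᵀ * Pstar + Pstar * A - Pstar * B * R⁻¹ * Bᵀ * Pstar + Q) := by
      simp only [Matrix.transpose_sub, Matrix.transpose_mul, Matrix.transpose_transpose,
        hRinvT, hPstarSym]
      simp only [Matrix.sub_mul, Matrix.mul_sub, Matrix.add_mul, Matrix.mul_add]
      simp only [Matrix.mul_assoc]
      simp only [hcanc1, hcanc2]
      noncomm_ring
    rw [key, h1, hARE, sub_zero]
  -- Lyapunov identity for the policy improvement step
  have hlyap : ∀ i, 1 ≤ i →
      (A - B * K (i+1))ᵀ * P i + P i * (A - B * K (i+1))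
        + (Q + (K (i+1))ᵀ * R * (K (i+1)))
        + (K i - K (i+1))ᵀ * R * (K i - K (i+1)) = 0 := by
    intro i hi
    have h1 := hPE i hi
    have key : (A - B * K (i+1))ᵀ * P i + P i * (A - B * K (i+1))
        + (Q + (K (i+1))ᵀ * R * (K (i+1)))
        + (K i - K (i+1))ᵀ * R * (K i - K (i+1))
        = (A - B * K i)ᵀ * P i + P i * (A - B * K i) + Q + (K i)ᵀ * R * (K i) := by
      rw [hPI i hi]
      have hPs : (P i)ᵀ = P i := hPsymm i hi
      simp only [Matrix.transpose_sub, Matrix.transpose_mul, Matrix.transpose_transpose,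
        hRinvT, hPs]
      simp only [Matrix.sub_mul, Matrix.mul_sub, Matrix.add_mul, Matrix.mul_add]
      simp only [Matrix.mul_assoc]
      simp only [hcanc1, hcanc2]
      noncomm_ring
    rw [key, h1]
  -- main induction
  have hmain : ∀ i, 1 ≤ i → IsHurwitz (A - B * K i) ∧ (P i - Pstar).PosSemidef := by
    intro i hi
    induction i, hi using Nat.le_induction with
    | base =>
      refine ⟨hK1, ?_⟩
      exact lyapunov_psd hn hK1 (hdsym _ _ (hPsymm 1 le_rfl) hPstarSym)
        (hKRKpsd _) (hPdiff 1 le_rfl)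
    | succ i hi ih =>
      obtain ⟨hHw, hPSD⟩ := ih
      have hPiPD : (P i).PosDef := by
        have h := hPstar.add_posSemidef hPSD
        have he : Pstar + (P i - Pstar) = P i := by abel
        rwa [he] at h
      have hHw1 : IsHurwitz (A - B * K (i+1)) := by
        have hY : IsHurwitz (A - B * K (i+1) + (-B) * (K i - K (i+1))) := by
          have he : A - B * K (i+1) + (-B) * (K i - K (i+1)) = A - B * K i := by
            rw [Matrix.neg_mul, Matrix.mul_sub]
            abel
          rw [he]
          exact hHw
        exact hurwitz_step hPiPD (hQ.add (hKRKpsd (K (i+1)))) hR (hlyap i hi) hY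
      refine ⟨hHw1, ?_⟩
      exact lyapunov_psd hn hHw1 (hdsym _ _ (hPsymm (i+1) (by omega)) hPstarSym)
        (hKRKpsd _) (hPdiff (i+1) (by omega))
  -- monotonicity
  have hmono : ∀ i, 1 ≤ i → (P i - P (i+1)).PosSemidef := by
    intro i hi
    have h2 := hPE (i+1) (by omega)
    have key : (A - B * K (i+1))ᵀ * (P i - P (i+1)) + (P i - P (i+1)) * (A - B * K (i+1))
        + (K i - K (i+1))ᵀ * R * (K i - K (i+1))
        = ((A - B * K (i+1))ᵀ * P i + P i * (A - B * K (i+1))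
            + (Q + (K (i+1))ᵀ * R * (K (i+1)))
            + (K i - K (i+1))ᵀ * R * (K i - K (i+1)))
          - ((A - B * K (i+1))ᵀ * P (i+1) + P (i+1) * (A - B * K (i+1)) + Q
            + (K (i+1))ᵀ * R * (K (i+1))) := by
      noncomm_ring
    have hident : (A - B * K (i+1))ᵀ * (P i - P (i+1)) + (P i - P (i+1)) * (A - B * K (i+1))
        + (K i - K (i+1))ᵀ * R * (K i - K (i+1)) = 0 := by
      rw [key, hlyap i hi, h2, sub_zero]
    exact lyapunov_psd hn (hmain (i+1) (by omega)).1
      (hdsym _ _ (hPsymm i hi) (hPsymm (i+1) (by omega))) (hKRKpsd _) hident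
  -- quadratic forms decrease and are bounded below
  have hquadmono : ∀ x : Fin n → ℝ, Antitone fun i : ℕ => x ⬝ᵥ (P (i+1) *ᵥ x) := by
    intro x
    apply antitone_nat_of_succ_le
    intro i
    have h := (hmono (i+1) (by omega)).dotProduct_mulVec_nonneg x
    rw [star_triv, Matrix.sub_mulVec, dotProduct_sub] at h
    linarith
  have hquadbdd : ∀ (x : Fin n → ℝ) (i : ℕ), x ⬝ᵥ (Pstar *ᵥ x) ≤ x ⬝ᵥ (P (i+1) *ᵥ x) := by
    intro x i
    have h := (hmain (i+1) (by omega)).2.dotProduct_mulVec_nonneg x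
    rw [star_triv, Matrix.sub_mulVec, dotProduct_sub] at h
    linarith
  have hquadconv : ∀ x : Fin n → ℝ, ∃ l, Tendsto (fun i => x ⬝ᵥ (P (i+1) *ᵥ x)) atTop (nhds l) := by
    intro x
    refine ⟨_, tendsto_atTop_ciInf (hquadmono x) ⟨x ⬝ᵥ (Pstar *ᵥ x), ?_⟩⟩
    rintro y ⟨i, rfl⟩
    exact hquadbdd x i
  have hentry : ∀ j k, ∃ l, Tendsto (fun i => P (i+1) j k) atTop (nhds l) := by
    intro j k
    obtain ⟨l1, h1⟩ := hquadconv (Pi.single j 1 + Pi.single k 1)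
    obtain ⟨l2, h2⟩ := hquadconv (Pi.single j 1)
    obtain ⟨l3, h3⟩ := hquadconv (Pi.single k 1)
    refine ⟨(l1 - l2 - l3) / 2, ?_⟩
    have hrw : (fun i : ℕ => P (i+1) j k) = fun i : ℕ =>
        ((Pi.single j 1 + Pi.single k 1) ⬝ᵥ (P (i+1) *ᵥ (Pi.single j 1 + Pi.single k 1))
          - Pi.single j 1 ⬝ᵥ (P (i+1) *ᵥ Pi.single j 1)
          - Pi.single k 1 ⬝ᵥ (P (i+1) *ᵥ Pi.single k 1)) / 2 := by
      funext i
      have hsym := (hPsymm (i+1) (by omega)).apply j k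
      rw [Matrix.mulVec_add, dotProduct_add, add_dotProduct, add_dotProduct,
        dot_single_mulVec, dot_single_mulVec, dot_single_mulVec, dot_single_mulVec, hsym]
      ring
    rw [hrw]
    exact ((h1.sub h2).sub h3).div_const 2
  choose Pl hPl using hentry
  set Pinf : Matrix (Fin n) (Fin n) ℝ := Matrix.of Pl with hPinfdef
  have hPl' : ∀ j k, Tendsto (fun i => P (i+1) j k) atTop (nhds (Pinf j k)) := hPl
  have hP2 : ∀ j k, Tendsto (fun i => P (i+2) j k) atTop (nhds (Pinf j k)) := by
    intro j k
    exact (hPl' j k).comp (tendsto_add_atTop_nat 1)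
  have hKconv : ∀ j k, Tendsto (fun i => K (i+2) j k) atTop
      (nhds ((R⁻¹ * Bᵀ * Pinf) j k)) := by
    intro j k
    have h := entry_tendsto_mul (f := fun _ : ℕ => R⁻¹ * Bᵀ) (g := fun i => P (i+1))
      (F := R⁻¹ * Bᵀ) (G := Pinf) (fun _ _ => tendsto_const_nhds) hPl' j k
    have hrw : (fun i : ℕ => K (i+2) j k) = fun i : ℕ => ((R⁻¹ * Bᵀ) * P (i+1)) j k := by
      funext i
      rw [hPI (i+1) (by omega)]
    rw [hrw]
    exact h
  have hXc : ∀ j k, Tendsto (fun i => (A - B * K (i+2)) j k) atTop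
      (nhds ((A - B * (R⁻¹ * Bᵀ * Pinf)) j k)) := by
    intro j k
    have hBK := entry_tendsto_mul (f := fun _ : ℕ => B) (g := fun i => K (i+2))
      (F := B) (G := R⁻¹ * Bᵀ * Pinf) (fun _ _ => tendsto_const_nhds) hKconv j k
    simp only [Matrix.sub_apply]
    exact tendsto_const_nhds.sub hBK
  have hXcT : ∀ j k, Tendsto (fun i => (A - B * K (i+2))ᵀ j k) atTop
      (nhds ((A - B * (R⁻¹ * Bᵀ * Pinf))ᵀ j k)) := by
    intro j k
    simp only [Matrix.transpose_apply]
    exact hXc k j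
  have hKcT : ∀ j k, Tendsto (fun i => (K (i+2))ᵀ j k) atTop
      (nhds ((R⁻¹ * Bᵀ * Pinf)ᵀ j k)) := by
    intro j k
    simp only [Matrix.transpose_apply]
    exact hKconv k j
  have hFeq : (A - B * (R⁻¹ * Bᵀ * Pinf))ᵀ * Pinf + Pinf * (A - B * (R⁻¹ * Bᵀ * Pinf)) + Q
      + (R⁻¹ * Bᵀ * Pinf)ᵀ * R * (R⁻¹ * Bᵀ * Pinf) = 0 := by
    ext j k
    have T1 := entry_tendsto_mul hXcT hP2
    have T2 := entry_tendsto_mul hP2 hXc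
    have T3 := entry_tendsto_mul
      (entry_tendsto_mul hKcT (g := fun _ : ℕ => R) (G := R) (fun _ _ => tendsto_const_nhds))
      hKconv
    have hLim : Tendsto (fun i =>
        ((A - B * K (i+2))ᵀ * P (i+2) + P (i+2) * (A - B * K (i+2)) + Q
          + (K (i+2))ᵀ * R * (K (i+2))) j k) atTop
        (nhds (((A - B * (R⁻¹ * Bᵀ * Pinf))ᵀ * Pinf + Pinf * (A - B * (R⁻¹ * Bᵀ * Pinf)) + Q
          + (R⁻¹ * Bᵀ * Pinf)ᵀ * R * (R⁻¹ * Bᵀ * Pinf)) j k)) := by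
      simp only [Matrix.add_apply]
      refine (((T1 j k).add (T2 j k)).add tendsto_const_nhds).add ?_
      simpa using T3 j k
    have hconst : (fun i : ℕ =>
        ((A - B * K (i+2))ᵀ * P (i+2) + P (i+2) * (A - B * K (i+2)) + Q
          + (K (i+2))ᵀ * R * (K (i+2))) j k) = (fun _ => (0:ℝ)) := by
      funext i
      rw [hPE (i+2) (by omega)]
      simp
    rw [hconst] at hLim
    have := tendsto_nhds_unique hLim tendsto_const_nhds
    simpa using this
  have hPinfSym : Pinfᵀ = Pinf := by
    ext j k
    rw [Matrix.transpose_apply]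
    have e : (fun i : ℕ => P (i+1) k j) = fun i : ℕ => P (i+1) j k := by
      funext i
      exact (hPsymm (i+1) (by omega)).apply j k
    have h1 := hPl' k j
    rw [e] at h1
    exact tendsto_nhds_unique h1 (hPl' j k)
  have hAREinf : Aᵀ * Pinf + Pinf * A - Pinf * (B * R⁻¹ * Bᵀ) * Pinf + Q = 0 := by
    have key : Aᵀ * Pinf + Pinf * A - Pinf * (B * R⁻¹ * Bᵀ) * Pinf + Q
        = (A - B * (R⁻¹ * Bᵀ * Pinf))ᵀ * Pinf + Pinf * (A - B * (R⁻¹ * Bᵀ * Pinf)) + Q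
          + (R⁻¹ * Bᵀ * Pinf)ᵀ * R * (R⁻¹ * Bᵀ * Pinf) := by
      simp only [Matrix.transpose_sub, Matrix.transpose_mul, Matrix.transpose_transpose,
        hRinvT, hPinfSym]
      simp only [Matrix.sub_mul, Matrix.mul_sub, Matrix.add_mul, Matrix.mul_add]
      simp only [Matrix.mul_assoc]
      simp only [hcanc1, hcanc2]
      noncomm_ring
    rw [key, hFeq]
  have hident : (A - B * R⁻¹ * Bᵀ * Pstar)ᵀ * (Pstar - Pinf)
      + (Pstar - Pinf) * (A - B * R⁻¹ * Bᵀ * Pstar)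
      + (Pinf - Pstar)ᵀ * (B * R⁻¹ * Bᵀ) * (Pinf - Pstar) = 0 := by
    have key : (A - B * R⁻¹ * Bᵀ * Pstar)ᵀ * (Pstar - Pinf)
        + (Pstar - Pinf) * (A - B * R⁻¹ * Bᵀ * Pstar)
        + (Pinf - Pstar)ᵀ * (B * R⁻¹ * Bᵀ) * (Pinf - Pstar)
        = (Aᵀ * Pstar + Pstar * A - Pstar * B * R⁻¹ * Bᵀ * Pstar + Q)
          - (Aᵀ * Pinf + Pinf * A - Pinf * (B * R⁻¹ * Bᵀ) * Pinf + Q) := by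
      simp only [Matrix.transpose_sub, Matrix.transpose_mul, Matrix.transpose_transpose,
        hRinvT, hPstarSym, hPinfSym]
      simp only [Matrix.sub_mul, Matrix.mul_sub, Matrix.add_mul, Matrix.mul_add]
      simp only [Matrix.mul_assoc]
      noncomm_ring
    rw [key, hARE, hAREinf, sub_zero]
  have hSpsd : ((Pinf - Pstar)ᵀ * (B * R⁻¹ * Bᵀ) * (Pinf - Pstar)).PosSemidef := by
    have h := hGpsd.conjTranspose_mul_mul_same (Pinf - Pstar)
    rwa [show (Pinf - Pstar)ᴴ = (Pinf - Pstar)ᵀ from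
      Matrix.conjTranspose_eq_transpose_of_trivial _] at h
  have hD : (Pstar - Pinf).PosSemidef :=
    lyapunov_psd hn hAstar (hdsym _ _ hPstarSym hPinfSym) hSpsd hident
  have hD2 : (Pinf - Pstar).PosSemidef := by
    rw [Matrix.posSemidef_iff_dotProduct_mulVec]
    constructor
    · show (Pinf - Pstar)ᴴ = Pinf - Pstar
      rw [Matrix.conjTranspose_eq_transpose_of_trivial]
      exact hdsym _ _ hPinfSym hPstarSym
    · intro x
      rw [star_triv]
      have hq : Tendsto (fun i => x ⬝ᵥ ((P (i+1) - Pstar) *ᵥ x)) atTop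
          (nhds (x ⬝ᵥ ((Pinf - Pstar) *ᵥ x))) := by
        apply tendsto_quadform
        intro j k
        simp only [Matrix.sub_apply]
        exact (hPl' j k).sub tendsto_const_nhds
      have hge : ∀ i : ℕ, 0 ≤ x ⬝ᵥ ((P (i+1) - Pstar) *ᵥ x) := by
        intro i
        have h := (hmain (i+1) (by omega)).2.dotProduct_mulVec_nonneg x
        rwa [star_triv] at h
      exact ge_of_tendsto' hq hge
  have hPP : Pinf = Pstar := by
    have h0 : Pinf - Pstar = 0 := psd_eq_zero hD2 (by rwa [neg_sub])
    exact sub_eq_zero.mp h0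
  refine ⟨fun i hi => (hmain i hi).1, fun i hi => ⟨hmono i hi, (hmain i hi).2⟩, ?_, ?_⟩
  · rw [← tendsto_add_atTop_iff_nat 1]
    have hsum : Tendsto (fun i : ℕ => ∑ j, ∑ k, ((P (i+1) - Pstar) j k) ^ 2) atTop (nhds 0) := by
      have h : ∀ j k, Tendsto (fun i : ℕ => ((P (i+1) - Pstar) j k) ^ 2) atTop (nhds 0) := by
        intro j k
        have h1 : Tendsto (fun i : ℕ => (P (i+1) - Pstar) j k) atTop
            (nhds ((Pinf - Pstar) j k)) := by
          simp only [Matrix.sub_apply]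
          exact (hPl' j k).sub tendsto_const_nhds
        have h2 := h1.pow 2
        rw [hPP] at h2
        simpa using h2
      have h := tendsto_finset_sum (Finset.univ) (fun j _ =>
        tendsto_finset_sum Finset.univ (fun k _ => h j k))
      simpa using h
    have hcomp := (Real.continuous_sqrt.tendsto 0).comp hsum
    rw [Real.sqrt_zero] at hcomp
    simpa [frobNorm, Function.comp_def] using hcomp
  · rw [← tendsto_add_atTop_iff_nat 2]
    have hsum : Tendsto (fun i : ℕ => ∑ j, ∑ k, ((K (i+2) - R⁻¹ * Bᵀ * Pstar) j k) ^ 2)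
        atTop (nhds 0) := by
      have h : ∀ j k, Tendsto (fun i : ℕ => ((K (i+2) - R⁻¹ * Bᵀ * Pstar) j k) ^ 2)
          atTop (nhds 0) := by
        intro j k
        have h1 : Tendsto (fun i : ℕ => (K (i+2) - R⁻¹ * Bᵀ * Pstar) j k) atTop
            (nhds ((R⁻¹ * Bᵀ * Pinf - R⁻¹ * Bᵀ * Pstar) j k)) := by
          simp only [Matrix.sub_apply]
          exact (hKconv j k).sub tendsto_const_nhds
        have h2 := h1.pow 2
        rw [hPP] at h2
        simpa using h2
      have h := tendsto_finset_sum (Finset.univ) (fun j _ =>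
        tendsto_finset_sum Finset.univ (fun k _ => h j k))
      simpa using h
    have hcomp := (Real.continuous_sqrt.tendsto 0).comp hsum
    rw [Real.sqrt_zero] at hcomp
    simpa [frobNorm, Function.comp_def] using hcomp
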